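/- Let {(X(θ), Y(θ)) : θ ∈ S ⊆ ℝ} be a family of bivariate random vectors and Θ₁, Θ₂ random variables on S. Suppose (1) X(θ) ≤_{st:wj} Y(θ) for all θ, (2) θ ↦ Y(θ) - X(θ) is increasing in the usual stochastic order, and (3) Θ₁ ≤_st Θ₂. Then X(Θ₁) ≤_{st:wj} Y(Θ₂). -/

import Mathlib

open MeasureTheory ProbabilityTheory Set

/-- If the survival functions are ordered, so are the "≥" tail probabilities. -/
lemma stwj_aux_ge {Ω' : Type*} [MeasurableSpace Ω'] (ν : Measure Ω') [IsProbabilityMeasure ν]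
    (Θ₁ Θ₂ : Ω' → ℝ) (hΘ₁m : Measurable Θ₁) (hΘ₂m : Measurable Θ₂)
    (h3 : ∀ t : ℝ, ν {ω' | Θ₁ ω' > t} ≤ ν {ω' | Θ₂ ω' > t}) (s : ℝ) :
    ν {ω' | s ≤ Θ₁ ω'} ≤ ν {ω' | s ≤ Θ₂ ω'} := by
  have key : ∀ Θ : Ω' → ℝ, {ω' | s ≤ Θ ω'} = ⋂ n : ℕ, {ω' | s - 1 / (n + 1) < Θ ω'} := by
    intro Θ
    ext ω'
    simp only [mem_setOf_eq, mem_iInter]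
    constructor
    · intro h n
      have : (0 : ℝ) < 1 / (n + 1) := by positivity
      linarith
    · intro h
      by_contra hc
      push_neg at hc
      obtain ⟨n, hn⟩ := exists_nat_one_div_lt (show (0 : ℝ) < s - Θ ω' by linarith)
      have := h n
      linarith
  have hcont : ∀ Θ : Ω' → ℝ, Measurable Θ →
      ν (⋂ n : ℕ, {ω' | s - 1 / (n + 1) < Θ ω'}) = ⨅ n : ℕ, ν {ω' | s - 1 / (n + 1) < Θ ω'} := by
    intro Θ hΘ
    refine Directed.measure_iInter (fun n => ?_) ?_ ⟨0, measure_ne_top _ _⟩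
    · exact (hΘ measurableSet_Ioi).nullMeasurableSet
    · intro m n
      rcases le_total m n with h | h
      · refine ⟨n, fun ω' hω' => ?_, fun ω' hω' => hω'⟩
        simp only [mem_setOf_eq] at *
        have hmn : (m : ℝ) ≤ n := Nat.cast_le.mpr h
        have : (1 : ℝ) / (n + 1) ≤ 1 / (m + 1) := by
          apply one_div_le_one_div_of_le (by positivity)
          linarith
        linarith
      · refine ⟨m, fun ω' hω' => hω', fun ω' hω' => ?_⟩
        simp only [mem_setOf_eq] at *
        have hmn : (n : ℝ) ≤ m := Nat.cast_le.mpr h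
        have : (1 : ℝ) / (m + 1) ≤ 1 / (n + 1) := by
          apply one_div_le_one_div_of_le (by positivity)
          linarith
        linarith
  rw [key Θ₁, key Θ₂, hcont Θ₁ hΘ₁m, hcont Θ₂ hΘ₂m]
  exact iInf_mono fun n => h3 _

/-- Monotone nonnegative bounded functions preserve the usual stochastic order
(in expectation, via lintegrals). -/
lemma stwj_aux_mono {Ω' : Type*} [MeasurableSpace Ω'] (ν : Measure Ω') [IsProbabilityMeasure ν]
    (Θ₁ Θ₂ : Ω' → ℝ) (hΘ₁m : Measurable Θ₁) (hΘ₂m : Measurable Θ₂)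
    (h3 : ∀ t : ℝ, ν {ω' | Θ₁ ω' > t} ≤ ν {ω' | Θ₂ ω' > t})
    (G : ℝ → ℝ) (hG : Monotone G) (hG0 : ∀ x, 0 ≤ G x) :
    ∫⁻ ω', ENNReal.ofReal (G (Θ₁ ω')) ∂ν ≤ ∫⁻ ω', ENNReal.ofReal (G (Θ₂ ω')) ∂ν := by
  have hm1 : AEMeasurable (fun ω' => G (Θ₁ ω')) ν := (hG.measurable.comp hΘ₁m).aemeasurable
  have hm2 : AEMeasurable (fun ω' => G (Θ₂ ω')) ν := (hG.measurable.comp hΘ₂m).aemeasurable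
  rw [lintegral_eq_lintegral_meas_lt ν (Filter.Eventually.of_forall fun ω' => hG0 _) hm1,
    lintegral_eq_lintegral_meas_lt ν (Filter.Eventually.of_forall fun ω' => hG0 _) hm2]
  refine lintegral_mono fun c => ?_
  -- the set {x | c < G x} is an upper set
  set A : Set ℝ := {x | c < G x} with hA
  have hupper : ∀ a ∈ A, ∀ b, a ≤ b → b ∈ A := fun a ha b hab => lt_of_lt_of_le ha (hG hab)
  have hset : ∀ Θ : Ω' → ℝ, {ω' | c < G (Θ ω')} = Θ ⁻¹' A := fun Θ => rfl
  rw [show {ω' : Ω' | c < G (Θ₁ ω')} = Θ₁ ⁻¹' A from rfl,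
      show {ω' : Ω' | c < G (Θ₂ ω')} = Θ₂ ⁻¹' A from rfl]
  rcases eq_empty_or_nonempty A with hAe | hAne
  · simp [hAe]
  by_cases hbd : BddBelow A
  · set s := sInf A with hs
    by_cases hsA : s ∈ A
    · have : A = Ici s := by
        ext x
        constructor
        · intro hx; exact csInf_le hbd hx
        · intro hx; exact hupper s hsA x hx
      rw [this]
      exact stwj_aux_ge ν Θ₁ Θ₂ hΘ₁m hΘ₂m h3 s
    · have : A = Ioi s := by
        ext x
        constructor
        · intro hx
          rcases lt_or_eq_of_le (csInf_le hbd hx) with h | h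
          · exact h
          · exact absurd hx (h ▸ hsA)
        · intro hx
          obtain ⟨a, ha, hax⟩ := exists_lt_of_csInf_lt hAne hx
          exact hupper a ha x hax.le
      rw [this]
      exact h3 s
  · have : A = univ := by
      ext x
      simp only [mem_univ, iff_true]
      obtain ⟨a, ha, hax⟩ := not_bddBelow_iff.1 hbd x
      exact hupper a ha x hax.le
    simp [this]

theorem stwj_mixture {Ω Ω' : Type*} [MeasurableSpace Ω] [MeasurableSpace Ω']
    (μ : Measure Ω) [IsProbabilityMeasure μ]
    (ν : Measure Ω') [IsProbabilityMeasure ν]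
    (S : Set ℝ) (X Y : ℝ → Ω → ℝ) (Θ₁ Θ₂ : Ω' → ℝ)
    (hΘ₁m : Measurable Θ₁) (hΘ₂m : Measurable Θ₂)
    (hΘ₁S : ∀ ω', Θ₁ ω' ∈ S) (hΘ₂S : ∀ ω', Θ₂ ω' ∈ S)
    (h1 : ∀ θ ∈ S, ∀ t : ℝ, μ {ω | X θ ω - Y θ ω > t} ≤ μ {ω | Y θ ω - X θ ω > t})
    (h2 : ∀ θ₁ ∈ S, ∀ θ₂ ∈ S, θ₁ ≤ θ₂ →
      ∀ t : ℝ, μ {ω | Y θ₁ ω - X θ₁ ω > t} ≤ μ {ω | Y θ₂ ω - X θ₂ ω > t})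
    (h3 : ∀ t : ℝ, ν {ω' | Θ₁ ω' > t} ≤ ν {ω' | Θ₂ ω' > t})
    (hmeas₁ : ∀ t : ℝ, Measurable fun ω' => (μ {ω | X (Θ₁ ω') ω - Y (Θ₁ ω') ω > t}).toReal)
    (hmeas₂ : ∀ t : ℝ, Measurable fun ω' => (μ {ω | Y (Θ₂ ω') ω - X (Θ₂ ω') ω > t}).toReal) :
    ∀ t : ℝ,
      ∫ ω', (μ {ω | X (Θ₁ ω') ω - Y (Θ₁ ω') ω > t}).toReal ∂ν ≤
        ∫ ω', (μ {ω | Y (Θ₂ ω') ω - X (Θ₂ ω') ω > t}).toReal ∂ν := by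
  intro t
  -- the survival function of Y θ - X θ, as a real-valued function of θ
  set g : ℝ → ℝ := fun a => (μ {ω | Y a ω - X a ω > t}).toReal with hg
  have hg0 : ∀ a, 0 ≤ g a := fun a => ENNReal.toReal_nonneg
  have hg1 : ∀ a, g a ≤ 1 := by
    intro a
    have : μ {ω | Y a ω - X a ω > t} ≤ 1 := prob_le_one
    simpa [hg] using ENNReal.toReal_mono (by simp) this
  have hgmono : ∀ a ∈ S, ∀ b ∈ S, a ≤ b → g a ≤ g b := by
    intro a ha b hb hab
    exact ENNReal.toReal_mono (measure_ne_top _ _) (h2 a ha b hb hab t)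
  -- monotone extension of g to all of ℝ
  set G : ℝ → ℝ := fun x => sSup (insert 0 (g '' {a | a ∈ S ∧ a ≤ x})) with hGdef
  have hbdd : ∀ x : ℝ, BddAbove (insert 0 (g '' {a | a ∈ S ∧ a ≤ x})) := by
    intro x
    refine ⟨1, fun y hy => ?_⟩
    rcases hy with hy | ⟨a, _, rfl⟩
    · simp [hy]
    · exact hg1 a
  have hGmono : Monotone G := by
    intro x y hxy
    apply csSup_le_csSup (hbdd y) (insert_nonempty _ _)
    apply insert_subset_insert
    exact image_mono fun a ha => ⟨ha.1, ha.2.trans hxy⟩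
  have hG0 : ∀ x, 0 ≤ G x := fun x => le_csSup (hbdd x) (mem_insert _ _)
  have hG1 : ∀ x, G x ≤ 1 := by
    intro x
    apply csSup_le (insert_nonempty _ _)
    rintro y (hy | ⟨a, _, rfl⟩)
    · simp [hy]
    · exact hg1 a
  have hGS : ∀ a ∈ S, G a = g a := by
    intro a ha
    apply le_antisymm
    · apply csSup_le (insert_nonempty _ _)
      rintro y (hy | ⟨b, hb, rfl⟩)
      · exact hy ▸ hg0 a
      · exact hgmono b hb.1 a ha hb.2
    · exact le_csSup (hbdd a) (mem_insert_of_mem _ ⟨a, ⟨ha, le_refl a⟩, rfl⟩)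
  -- integrability facts
  have hint1 : Integrable (fun ω' => (μ {ω | X (Θ₁ ω') ω - Y (Θ₁ ω') ω > t}).toReal) ν := by
    refine (integrable_const (1 : ℝ)).mono' ((hmeas₁ t).aestronglyMeasurable) ?_
    refine Filter.Eventually.of_forall fun ω' => ?_
    rw [Real.norm_eq_abs, abs_of_nonneg ENNReal.toReal_nonneg]
    exact ENNReal.toReal_mono (by simp) prob_le_one
  have hintG : ∀ Θ : Ω' → ℝ, Measurable Θ → Integrable (fun ω' => G (Θ ω')) ν := by
    intro Θ hΘ
    refine (integrable_const (1 : ℝ)).mono'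
      ((hGmono.measurable.comp hΘ).aestronglyMeasurable) ?_
    exact Filter.Eventually.of_forall fun ω' => by
      rw [Real.norm_eq_abs, abs_of_nonneg (hG0 _)]; exact hG1 _
  -- step 1 : pointwise comparison under Θ₁
  have step1 : ∫ ω', (μ {ω | X (Θ₁ ω') ω - Y (Θ₁ ω') ω > t}).toReal ∂ν ≤
      ∫ ω', G (Θ₁ ω') ∂ν := by
    refine integral_mono hint1 (hintG Θ₁ hΘ₁m) fun ω' => ?_
    rw [hGS _ (hΘ₁S ω')]
    exact ENNReal.toReal_mono (measure_ne_top _ _) (h1 _ (hΘ₁S ω') t)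
  -- step 2 : stochastic ordering
  have step2 : ∫ ω', G (Θ₁ ω') ∂ν ≤ ∫ ω', G (Θ₂ ω') ∂ν := by
    rw [integral_eq_lintegral_of_nonneg_ae (Filter.Eventually.of_forall fun ω' => hG0 _)
          ((hGmono.measurable.comp hΘ₁m).aestronglyMeasurable),
        integral_eq_lintegral_of_nonneg_ae (Filter.Eventually.of_forall fun ω' => hG0 _)
          ((hGmono.measurable.comp hΘ₂m).aestronglyMeasurable)]
    apply ENNReal.toReal_mono
    · refine ne_top_of_le_ne_top (by simp : (1 : ENNReal) ≠ ⊤) ?_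
      calc ∫⁻ ω', ENNReal.ofReal (G (Θ₂ ω')) ∂ν ≤ ∫⁻ _, 1 ∂ν :=
            lintegral_mono fun ω' => by
              simpa using ENNReal.ofReal_le_one.mpr (hG1 (Θ₂ ω'))
        _ = 1 := by simp
    · exact stwj_aux_mono ν Θ₁ Θ₂ hΘ₁m hΘ₂m h3 G hGmono hG0
  -- step 3 : rewrite the right side
  have step3 : ∫ ω', G (Θ₂ ω') ∂ν =
      ∫ ω', (μ {ω | Y (Θ₂ ω') ω - X (Θ₂ ω') ω > t}).toReal ∂ν := by
    apply integral_congr_ae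
    exact Filter.Eventually.of_forall fun ω' => hGS _ (hΘ₂S ω')
  linarith
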